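/- Let G = ⊕_p ℤ[1/p] be the direct sum over all primes p of the additive groups of p-adic rationals. Then the cardinality of the automorphism group of the automorphism group of G, that is, of Aut(AddAut(G)), is exactly 2^(2^ℵ₀). In particular, G is a countable group with |Aut(G)| = 2^ℵ₀ and |Aut(Aut(G))| = 2^(2^ℵ₀). -/

import Mathlib

open DirectSum

/-- For a prime `p`, the additive subgroup `ℤ[1/p] ⊆ ℚ` of `p`-adic rationals,
consisting of all rationals of the form `m / p ^ n` with `m : ℤ` and `n : ℕ`. -/
def padicRationals (p : ℕ) (hp : p.Prime) : AddSubgroup ℚ where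
  carrier := {x : ℚ | ∃ m : ℤ, ∃ n : ℕ, x = (m : ℚ) / (p : ℚ) ^ n}
  zero_mem' := ⟨0, 0, by simp⟩
  add_mem' := by
    rintro a b ⟨m₁, n₁, rfl⟩ ⟨m₂, n₂, rfl⟩
    have hp0 : (p : ℚ) ≠ 0 := by exact_mod_cast hp.ne_zero
    refine ⟨m₁ * (p : ℤ) ^ n₂ + m₂ * (p : ℤ) ^ n₁, n₁ + n₂, ?_⟩
    push_cast
    rw [pow_add]
    field_simp
  neg_mem' := by
    rintro a ⟨m, n, rfl⟩
    exact ⟨-m, n, by push_cast; ring⟩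

open DirectSum Cardinal

namespace CardAutAux

abbrev P (q : Nat.Primes) : AddSubgroup ℚ := padicRationals q.1 q.2

lemma one_mem_P (q : Nat.Primes) : (1 : ℚ) ∈ P q := ⟨1, 0, by simp⟩

def e (q : Nat.Primes) : P q := ⟨1, one_mem_P q⟩

lemma mul_mem_P (q : Nat.Primes) {a b : ℚ} (ha : a ∈ P q) (hb : b ∈ P q) : a * b ∈ P q := by
  obtain ⟨m₁, n₁, rfl⟩ := ha
  obtain ⟨m₂, n₂, rfl⟩ := hb
  refine ⟨m₁ * m₂, n₁ + n₂, ?_⟩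
  push_cast
  rw [pow_add]
  ring

lemma q_ne_zero (q : Nat.Primes) : ((q.1 : ℚ)) ≠ 0 := by
  exact_mod_cast q.2.ne_zero

/-- L1 : every hom from `P p` to `ℚ` is multiplication by `f 1`. -/
lemma hom_apply (p : Nat.Primes) (f : P p →+ ℚ) (x : P p) :
    f x = (x : ℚ) * f (e p) := by
  obtain ⟨m, n, hx⟩ := x.2
  have hp : ((p.1 : ℚ)) ^ n ≠ 0 := pow_ne_zero _ (q_ne_zero p)
  have key : (p.1 ^ n : ℕ) • x = m • e p := by
    apply Subtype.ext
    push_cast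
    rw [hx]
    simp only [nsmul_eq_mul, zsmul_eq_mul, Nat.cast_pow]
    field_simp [e]
    simp [e]
  have h1 := congrArg f key
  rw [map_nsmul, map_zsmul] at h1
  have h2 : ((p.1 : ℚ))^n * f x = (m : ℚ) * f (e p) := by
    rw [nsmul_eq_mul, zsmul_eq_mul] at h1
    exact_mod_cast h1
  rw [hx]
  field_simp
  linarith [h2]


/-- L2 : homs between distinct components vanish. -/
lemma hom_zero {p q : Nat.Primes} (hpq : p ≠ q) (f : P p →+ P q) : f = 0 := by
  have key : f (e p) = 0 := by
    obtain ⟨m₀, k₀, hc⟩ := (f (e p)).2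
    have hdvd : ∀ n : ℕ, (p.1 : ℤ) ^ n ∣ m₀ := by
      intro n
      have hpn : ((p.1 : ℚ)) ^ n ≠ 0 := pow_ne_zero _ (q_ne_zero p)
      have hyn : (1 : ℚ) / (p.1 : ℚ) ^ n ∈ P p := ⟨1, n, by push_cast; ring⟩
      have hkey : (p.1 ^ n : ℕ) • (⟨_, hyn⟩ : P p) = e p := by
        apply Subtype.ext
        push_cast
        simp only [nsmul_eq_mul, Nat.cast_pow]
        field_simp [e, hpn]
        simp [e]
      have h1 := congrArg f hkey
      rw [map_nsmul] at h1
      obtain ⟨m, k, hy⟩ := (f ⟨_, hyn⟩).2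
      have h2 : ((p.1 : ℚ)) ^ n * ((m : ℚ) / (q.1 : ℚ) ^ k) = (m₀ : ℚ) / (q.1 : ℚ) ^ k₀ := by
        have := congrArg (Subtype.val) h1
        push_cast at this
        rw [nsmul_eq_mul] at this
        rw [hy, hc] at this
        exact_mod_cast this
      have h3 : (p.1 : ℤ) ^ n * m * (q.1 : ℤ) ^ k₀ = m₀ * (q.1 : ℤ) ^ k := by
        have hq : ((q.1 : ℚ)) ≠ 0 := q_ne_zero q
        field_simp at h2
        exact_mod_cast h2.trans (mul_comm _ _)
      have hco : IsCoprime ((p.1 : ℤ) ^ n) ((q.1 : ℤ) ^ k) := by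
        apply IsCoprime.pow
        rw [Int.isCoprime_iff_gcd_eq_one]
        exact_mod_cast (Nat.coprime_primes p.2 q.2).mpr (fun h => hpq (Subtype.ext h))
      have : (p.1 : ℤ) ^ n ∣ m₀ * (q.1 : ℤ) ^ k := ⟨m * (q.1 : ℤ) ^ k₀, by linarith [h3]⟩
      exact hco.dvd_of_dvd_mul_right this
    have hm0 : m₀ = 0 := by
      by_contra hne
      have hlt := Int.le_of_dvd (abs_pos.mpr hne) ((dvd_abs _ _).mpr (hdvd m₀.natAbs))
      have h2p : (2 : ℤ) ^ m₀.natAbs ≤ (p.1 : ℤ) ^ m₀.natAbs := by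
        apply pow_le_pow_left₀ (by norm_num)
        exact_mod_cast p.2.two_le
      have habs : |m₀| = (m₀.natAbs : ℤ) := Int.abs_eq_natAbs m₀
      have hlt2 : (m₀.natAbs : ℤ) < 2 ^ m₀.natAbs := by
        exact_mod_cast (Nat.lt_two_pow_self (n := m₀.natAbs))
      omega
    apply Subtype.ext
    rw [hc, hm0]
    simp
  ext x
  have h := hom_apply p (((P q).subtype).comp f) x
  simp only [AddMonoidHom.comp_apply, AddSubgroup.coe_subtype] at h
  rw [h, key]
  simp

abbrev Gr := ⨁ (q : Nat.Primes), P q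

instance instGroupAut : Group (AddAut Gr) where
  mul g h := AddEquiv.trans h g
  one := AddEquiv.refl _
  inv := AddEquiv.symm
  mul_assoc _ _ _ := rfl
  one_mul _ := rfl
  mul_one _ := rfl
  inv_mul_cancel := AddEquiv.self_trans_symm

@[simp]
lemma aut_one_apply (x : Gr) : (1 : AddAut Gr) x = x := rfl

@[simp]
lemma aut_mul_apply (f g : AddAut Gr) (x : Gr) : (f * g) x = f (g x) := rfl

/-- evaluation at a component, as an AddMonoidHom -/
def ev (q : Nat.Primes) : Gr →+ P q := DFinsupp.evalAddMonoidHom q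

lemma ev_apply (q : Nat.Primes) (x : Gr) : ev q x = x q := rfl

/-- extensionality for additive automorphisms of `Gr` -/
lemma autext {f g : AddAut Gr} (h : ∀ p x, f (of _ p x) = g (of _ p x)) : f = g := by
  have : (f : Gr ≃+ Gr).toAddMonoidHom = (g : Gr ≃+ Gr).toAddMonoidHom :=
    DirectSum.addHom_ext h
  ext x : 1
  exact congrArg (fun (F : Gr →+ Gr) => F x) this

/-- the scaling factor of `φ` on the `p` component -/
def rho (φ : AddAut Gr) (p : Nat.Primes) : ℚ := ((φ (of _ p (e p))) p : ℚ)

lemma rho_mem (φ : AddAut Gr) (p : Nat.Primes) : rho φ p ∈ P p := ((φ (of _ p (e p))) p).2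

/-- F1, componentwise, same index -/
lemma apply_of_same (φ : AddAut Gr) (p : Nat.Primes) (x : P p) :
    ((φ (of _ p x)) p : ℚ) = rho φ p * (x : ℚ) := by
  have h := hom_apply p (((P p).subtype).comp ((ev p).comp
    ((φ : Gr ≃+ Gr).toAddMonoidHom.comp (of (fun q : Nat.Primes => ↥(P q)) p)))) x
  simp only [AddMonoidHom.comp_apply, AddSubgroup.coe_subtype, ev_apply, AddEquiv.coe_toAddMonoidHom] at h
  rw [h]
  rw [mul_comm]
  rfl

/-- F1, componentwise, different index -/
lemma apply_of_ne (φ : AddAut Gr) {p q : Nat.Primes} (hpq : p ≠ q) (x : P p) :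
    (φ (of _ p x)) q = 0 := by
  have h := hom_zero hpq ((ev q).comp ((φ : Gr ≃+ Gr).toAddMonoidHom.comp (of (fun q : Nat.Primes => ↥(P q)) p)))
  exact congrArg (fun (F : P p →+ P q) => F x) h

/-- F1 -/
lemma apply_of (φ : AddAut Gr) (p : Nat.Primes) (x : P p) :
    φ (of _ p x) = of _ p ⟨rho φ p * (x : ℚ), mul_mem_P p (rho_mem φ p) x.2⟩ := by
  apply DFinsupp.ext
  intro q
  by_cases hq : p = q
  · subst hq
    rw [DirectSum.of_eq_same]
    exact Subtype.ext (apply_of_same φ p x)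
  · rw [DirectSum.of_eq_of_ne _ _ _ (Ne.symm hq)]
    exact apply_of_ne φ hq x

lemma rho_one (p : Nat.Primes) : rho 1 p = 1 := by
  simp [rho, DirectSum.of_eq_same, e]

lemma rho_mul (φ ψ : AddAut Gr) (p : Nat.Primes) :
    rho (φ * ψ) p = rho φ p * rho ψ p := by
  have h1 : (φ * ψ) (of _ p (e p)) = φ (ψ (of _ p (e p))) := rfl
  rw [rho, h1, apply_of ψ p (e p)]
  rw [show (⟨rho ψ p * ((e p : ℚ)), _⟩ : P p) = ⟨rho ψ p, rho_mem ψ p⟩ from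
    Subtype.ext (by simp [e])]
  rw [apply_of_same φ p]

lemma rho_ne_zero (φ : AddAut Gr) (p : Nat.Primes) : rho φ p ≠ 0 := by
  have h : rho (φ⁻¹ * φ) p = 1 := by rw [inv_mul_cancel]; exact rho_one p
  rw [rho_mul] at h
  intro h0
  simp [h0] at h

def sgnAux (r : ℚ) : ℤˣ := if 0 < r then 1 else -1

lemma sgnAux_mul {a b : ℚ} (ha : a ≠ 0) (hb : b ≠ 0) :
    sgnAux (a * b) = sgnAux a * sgnAux b := by
  unfold sgnAux
  rcases lt_or_gt_of_ne ha with h1 | h1 <;> rcases lt_or_gt_of_ne hb with h2 | h2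
  · rw [if_pos (mul_pos_of_neg_of_neg h1 h2), if_neg (not_lt.2 h1.le),
      if_neg (not_lt.2 h2.le)]; norm_num
  · rw [if_neg (not_lt.2 (mul_nonpos_of_nonpos_of_nonneg h1.le h2.le)),
      if_neg (not_lt.2 h1.le), if_pos h2]; norm_num
  · rw [if_neg (not_lt.2 (mul_nonpos_of_nonneg_of_nonpos h1.le h2.le)),
      if_pos h1, if_neg (not_lt.2 h2.le)]; norm_num
  · rw [if_pos (mul_pos h1 h2), if_pos h1, if_pos h2]; norm_num

/-- the sign character -/
def s : AddAut Gr →* (Nat.Primes → ℤˣ) where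
  toFun φ p := sgnAux (rho φ p)
  map_one' := by funext p; simp [sgnAux, rho_one]
  map_mul' φ ψ := by
    funext p
    simp only [Pi.mul_apply]
    rw [rho_mul, sgnAux_mul (rho_ne_zero φ p) (rho_ne_zero ψ p)]

/-- the diagonal ±1 automorphisms -/
def nuFun (ε : Nat.Primes → ℤˣ) : AddAut Gr :=
  (DFinsupp.mapRange.addEquiv
    (fun p => ((DistribMulAction.toAddAut ℤˣ (P p)) (ε p) : P p ≃+ P p)) : Gr ≃+ Gr)

lemma nuFun_apply (ε : Nat.Primes → ℤˣ) (x : Gr) (q : Nat.Primes) :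
    nuFun ε x q = ε q • x q := by
  rfl

lemma nuFun_of (ε : Nat.Primes → ℤˣ) (p : Nat.Primes) (x : P p) :
    nuFun ε (of _ p x) = of _ p (ε p • x) := by
  apply DFinsupp.ext
  intro q
  rw [nuFun_apply]
  by_cases hq : p = q
  · subst hq; rw [DirectSum.of_eq_same, DirectSum.of_eq_same]
  · rw [DirectSum.of_eq_of_ne _ _ _ (Ne.symm hq), DirectSum.of_eq_of_ne _ _ _ (Ne.symm hq), smul_zero]

/-- `ν` as a monoid hom -/
def nu : (Nat.Primes → ℤˣ) →* AddAut Gr where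
  toFun := nuFun
  map_one' := by
    apply autext (g := 1)
    intro p x
    rw [nuFun_of, aut_one_apply]
    simp
  map_mul' ε ε' := by
    apply autext
    intro p x
    rw [nuFun_of, aut_mul_apply, nuFun_of, nuFun_of, Pi.mul_apply, mul_smul]

lemma coe_unit_smul (p : Nat.Primes) (u : ℤˣ) (x : P p) :
    ((u • x : P p) : ℚ) = ((u : ℤ) : ℚ) * (x : ℚ) := by
  rw [Units.smul_def]
  push_cast
  rw [zsmul_eq_mul]

lemma rho_nu (ε : Nat.Primes → ℤˣ) (p : Nat.Primes) :
    rho (nu ε) p = ((ε p : ℤ) : ℚ) := by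
  show ((nuFun ε (of _ p (e p))) p : ℚ) = _
  rw [nuFun_of, DirectSum.of_eq_same, coe_unit_smul]
  simp [e]

lemma s_nu (ε : Nat.Primes → ℤˣ) : s (nu ε) = ε := by
  funext p
  show sgnAux (rho (nu ε) p) = ε p
  rw [rho_nu]
  rcases Int.units_eq_one_or (ε p) with h | h <;> rw [h] <;> norm_num [sgnAux]

lemma nu_injective : Function.Injective nu := by
  intro ε ε' h
  have := congrArg s h
  rwa [s_nu, s_nu] at this

/-- centrality of diagonal sign automorphisms -/
lemma nu_central (ε : Nat.Primes → ℤˣ) (φ : AddAut Gr) : nu ε * φ = φ * nu ε := by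
  apply autext
  intro p x
  rw [aut_mul_apply, aut_mul_apply]
  show nuFun ε (φ (of _ p x)) = φ (nuFun ε (of _ p x))
  rw [apply_of, nuFun_of, nuFun_of, apply_of]
  congr 1
  apply Subtype.ext
  show ((ε p • (⟨rho φ p * (x : ℚ), mul_mem_P p (rho_mem φ p) x.2⟩ : P p) : P p) : ℚ)
      = rho φ p * ((ε p • x : P p) : ℚ)
  rw [coe_unit_smul, coe_unit_smul]
  show (((ε p : ℤ) : ℚ)) * (rho φ p * (x : ℚ)) = rho φ p * ((((ε p : ℤ) : ℚ)) * (x : ℚ))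
  ring

def pzero : Nat.Primes := ⟨2, Nat.prime_two⟩

def epszero : Nat.Primes → ℤˣ := fun p => if p = pzero then -1 else 1

def cc : AddAut Gr := nu epszero

lemma neg_one_ne_one : (-1 : ℤˣ) ≠ 1 := by decide

lemma cc_ne_one : cc ≠ 1 := by
  intro h
  have h1 : epszero = 1 := by
    have h2 := congrArg s h
    rw [map_one] at h2
    rw [show s cc = epszero from s_nu epszero] at h2
    exact h2
  have h3 := congrFun h1 pzero
  simp [epszero] at h3

lemma cc_sq : cc * cc = 1 := by
  rw [cc, ← map_mul, show epszero * epszero = 1 from ?_, map_one]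
  funext p
  by_cases h : p = pzero <;> simp [epszero, h]

lemma cc_central (φ : AddAut Gr) : cc * φ = φ * cc := nu_central _ _

def vv : ℤˣ → ZMod 2 := fun u => if u = 1 then 0 else 1

lemma vv_mul (u u' : ℤˣ) : vv (u * u') = vv u + vv u' := by
  rcases Int.units_eq_one_or u with h | h <;> rcases Int.units_eq_one_or u' with h' | h' <;>
    subst h <;> subst h' <;> decide

abbrev V' := {p : Nat.Primes // p ≠ pzero} → ZMod 2

/-- the basic character datum -/
def chiB (a : AddAut Gr) : V' := fun p => vv (s a p.1)

lemma chiB_mul (a b : AddAut Gr) : chiB (a * b) = chiB a + chiB b := by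
  funext p
  simp only [chiB, map_mul, Pi.mul_apply, Pi.add_apply]
  exact vv_mul _ _

lemma chiB_one : chiB 1 = 0 := by
  funext p
  simp [chiB, vv]

lemma chiB_cc : chiB cc = 0 := by
  funext p
  simp only [chiB, cc, s_nu, Pi.zero_apply]
  rw [show epszero p.1 = 1 from by simp [epszero, p.2]]
  simp [vv]

lemma chiB_surj (x : V') : ∃ a : AddAut Gr, chiB a = x := by
  refine ⟨nu (fun q => if h : q = pzero then 1 else (if x ⟨q, h⟩ = 0 then 1 else -1)), ?_⟩
  funext p
  have hz : ∀ z : ZMod 2, z = 0 ∨ z = 1 := by decide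
  simp only [chiB, s_nu]
  rw [dif_neg p.2]
  rcases hz (x p) with h | h
  · rw [if_pos h]
    rw [h]
    simp [vv]
  · rw [if_neg (by rw [show x ⟨p.1, p.2⟩ = x p from rfl, h]; decide)]
    rw [h]
    simp [vv, neg_one_ne_one]

def pw (z : ZMod 2) : AddAut Gr := if z = 0 then 1 else cc

lemma pw_add (z w : ZMod 2) : pw (z + w) = pw z * pw w := by
  have hz : ∀ z : ZMod 2, z = 0 ∨ z = 1 := by decide
  rcases hz z with h | h <;> rcases hz w with h' | h' <;> subst h <;> subst h'
  · simp [pw]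
  · simp [pw]
  · simp [pw]
  · rw [show (1 + 1 : ZMod 2) = 0 from by decide]
    simp only [pw, if_pos (rfl : (0 : ZMod 2) = 0), if_neg (by decide : (1 : ZMod 2) ≠ 0)]
    exact cc_sq.symm

lemma pw_central (z : ZMod 2) (φ : AddAut Gr) : pw z * φ = φ * pw z := by
  by_cases h : z = 0 <;> simp [pw, h, cc_central]

lemma pw_sq (z : ZMod 2) : pw z * pw z = 1 := by
  by_cases h : z = 0 <;> simp [pw, h, cc_sq]

lemma pw_inj {z w : ZMod 2} (h : pw z = pw w) : z = w := by
  have hz : ∀ z : ZMod 2, z = 0 ∨ z = 1 := by decide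
  rcases hz z with h1 | h1 <;> rcases hz w with h2 | h2 <;> subst h1 <;> subst h2 <;>
    first
    | rfl
    | (exfalso; simp [pw] at h;
       first
       | exact cc_ne_one h.symm
       | exact cc_ne_one h)

section T

variable (l : V' →ₗ[ZMod 2] ZMod 2)

def Tfun (a : AddAut Gr) : AddAut Gr := a * pw (l (chiB a))

lemma Tfun_mul (a b : AddAut Gr) : Tfun l (a * b) = Tfun l a * Tfun l b := by
  unfold Tfun
  rw [chiB_mul, map_add, pw_add]
  exact (Commute.mul_mul_mul_comm ((pw_central (l (chiB a)) b).symm) a (pw (l (chiB b))))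

lemma chiB_pw (z : ZMod 2) : l (chiB (pw z)) = 0 := by
  by_cases h : z = 0
  · rw [h]
    show l (chiB 1) = 0
    rw [chiB_one, map_zero]
  · have : pw z = cc := by simp [pw, h]
    rw [this, chiB_cc, map_zero]

lemma Tfun_invol (a : AddAut Gr) : Tfun l (Tfun l a) = a := by
  unfold Tfun
  rw [chiB_mul, map_add, chiB_pw, add_zero, mul_assoc, pw_sq, mul_one]

/-- the automorphism of `AddAut Gr` attached to a linear functional -/
def T : MulAut (AddAut Gr) where
  toFun := Tfun l
  invFun := Tfun l
  left_inv := Tfun_invol l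
  right_inv := Tfun_invol l
  map_mul' := Tfun_mul l

lemma T_injective : Function.Injective T := by
  intro l l' h
  have key : ∀ a : AddAut Gr, l (chiB a) = l' (chiB a) := by
    intro a
    have h1 : Tfun l a = Tfun l' a := by
      have := DFunLike.congr_fun h a
      exact this
    unfold Tfun at h1
    exact pw_inj (mul_left_cancel h1)
  apply LinearMap.ext
  intro x
  obtain ⟨a, rfl⟩ := chiB_surj x
  exact key a

end T

instance : Countable Gr := inferInstanceAs (Countable (Π₀ (q : Nat.Primes), P q))

noncomputable def uEquiv : ℤˣ ≃ ZMod 2 where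
  toFun u := if u = 1 then 0 else 1
  invFun z := if z = 0 then 1 else -1
  left_inv u := by rcases Int.units_eq_one_or u with h | h <;> subst h <;> decide
  right_inv z := by
    rcases (by decide : ∀ z : ZMod 2, z = 0 ∨ z = 1) z with h | h <;> subst h <;> decide

lemma mk_units_int : #ℤˣ = 2 := by
  rw [Cardinal.mk_congr uEquiv, Cardinal.mk_fintype]
  simp

lemma mk_E : #(Nat.Primes → ℤˣ) = 2 ^ Cardinal.aleph0 := by
  rw [← Cardinal.power_def, mk_units_int, Cardinal.mk_eq_aleph0]

/-- `|Aut G| = 2 ^ ℵ₀` -/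
lemma mk_addAut : #(AddAut Gr) = 2 ^ Cardinal.aleph0 := by
  apply le_antisymm
  · have h1 : #(AddAut Gr) ≤ #(Gr → Gr) :=
      Cardinal.mk_le_of_injective (f := fun (φ : AddAut Gr) (x : Gr) => φ x)
        (fun φ ψ h => by ext x : 1; exact congrFun h x)
    have h2 : #(Gr → Gr) = #Gr ^ #Gr := (Cardinal.power_def Gr Gr).symm
    have h3 : #Gr ≤ Cardinal.aleph0 := Cardinal.mk_le_aleph0
    calc #(AddAut Gr) ≤ #Gr ^ #Gr := h2 ▸ h1
      _ ≤ Cardinal.aleph0 ^ #Gr := Cardinal.power_le_power_right h3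
      _ ≤ Cardinal.aleph0 ^ Cardinal.aleph0 :=
          Cardinal.power_le_power_left Cardinal.aleph0_ne_zero h3
      _ = 2 ^ Cardinal.aleph0 := Cardinal.power_self_eq le_rfl
  · have := Cardinal.mk_le_of_injective nu_injective
    rwa [mk_E] at this

instance : Infinite {p : Nat.Primes // p ≠ pzero} :=
  Set.infinite_coe_iff.mpr ((Set.finite_singleton pzero).infinite_compl)

lemma mk_V' : #V' = 2 ^ Cardinal.aleph0 := by
  rw [← Cardinal.power_def, Cardinal.mk_fintype (ZMod 2), Cardinal.mk_eq_aleph0]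
  simp

lemma mk_index :
    #(Module.Basis.ofVectorSpaceIndex (ZMod 2) V') = 2 ^ Cardinal.aleph0 := by
  have hrepr := (Module.Basis.ofVectorSpace (ZMod 2) V').repr.toEquiv
  have h1 : #V' = #((Module.Basis.ofVectorSpaceIndex (ZMod 2) V') →₀ ZMod 2) :=
    Cardinal.mk_congr hrepr
  rcases finite_or_infinite (Module.Basis.ofVectorSpaceIndex (ZMod 2) V') with hfin | hinf
  · exfalso
    have h2 : #((Module.Basis.ofVectorSpaceIndex (ZMod 2) V') →₀ ZMod 2) <
        Cardinal.aleph0 := by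
      have hle : #((Module.Basis.ofVectorSpaceIndex (ZMod 2) V') →₀ ZMod 2) ≤
          #((Module.Basis.ofVectorSpaceIndex (ZMod 2) V') → ZMod 2) :=
        Cardinal.mk_le_of_injective (f := fun f => ⇑f) DFunLike.coe_injective
      have hfin2 : #((Module.Basis.ofVectorSpaceIndex (ZMod 2) V') → ZMod 2) <
          Cardinal.aleph0 := Cardinal.mk_lt_aleph0_iff.mpr inferInstance
      exact hle.trans_lt hfin2
    rw [mk_V'] at h1
    have hc : (2 : Cardinal) ^ Cardinal.aleph0 < Cardinal.aleph0 := by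
      rw [h1]; exact h2
    exact absurd hc (lt_asymm (Cardinal.cantor _))
  · rw [Cardinal.mk_finsupp_of_infinite, mk_V'] at h1
    rcases max_cases #(Module.Basis.ofVectorSpaceIndex (ZMod 2) V') #(ZMod 2) with ⟨hm, _⟩ | ⟨hm, hle⟩
    · rw [hm] at h1; exact h1.symm
    · exfalso
      rw [hm, Cardinal.mk_fintype] at h1
      have hlt : ((Fintype.card (ZMod 2) : Cardinal)) < Cardinal.aleph0 :=
        Cardinal.nat_lt_aleph0 _
      have hc : (2 : Cardinal) ^ Cardinal.aleph0 < Cardinal.aleph0 := by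
        rw [h1]; exact hlt
      exact absurd hc (lt_asymm (Cardinal.cantor _))

lemma mk_dual_ge :
    (2 : Cardinal) ^ ((2 : Cardinal) ^ Cardinal.aleph0) ≤ #(V' →ₗ[ZMod 2] ZMod 2) := by
  have hequiv := ((Module.Basis.ofVectorSpace (ZMod 2) V').constr ℕ
    (M' := ZMod 2)).toEquiv
  have h1 : #((Module.Basis.ofVectorSpaceIndex (ZMod 2) V') → ZMod 2)
      = #(V' →ₗ[ZMod 2] ZMod 2) := Cardinal.mk_congr hequiv
  rw [← Cardinal.power_def, Cardinal.mk_fintype (ZMod 2), mk_index] at h1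
  rw [← h1]
  norm_num

/-- `|Aut (Aut G)| = 2 ^ (2 ^ ℵ₀)` -/
lemma mk_mulAut :
    #(MulAut (AddAut Gr)) = (2 : Cardinal) ^ ((2 : Cardinal) ^ Cardinal.aleph0) := by
  apply le_antisymm
  · have h1 : #(MulAut (AddAut Gr)) ≤ #(AddAut Gr → AddAut Gr) :=
      Cardinal.mk_le_of_injective (f := fun (Φ : MulAut (AddAut Gr)) a => Φ a)
        (fun Φ Ψ h => MulEquiv.ext fun a => congrFun h a)
    have h2 : #(AddAut Gr → AddAut Gr) = #(AddAut Gr) ^ #(AddAut Gr) :=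
      (Cardinal.power_def _ _).symm
    rw [h2, mk_addAut] at h1
    rwa [Cardinal.power_self_eq (Cardinal.cantor Cardinal.aleph0).le] at h1
  · exact mk_dual_ge.trans (Cardinal.mk_le_of_injective T_injective)

def multEquiv : Multiplicative (AddAut Gr) ≃* AddAut Gr :=
  { Equiv.refl _ with map_mul' := fun _ _ => rfl }

lemma mk_mulAut' :
    #(MulAut (Multiplicative (AddAut Gr))) = (2 : Cardinal) ^ ((2 : Cardinal) ^ Cardinal.aleph0) := by
  rw [← mk_mulAut]
  exact Cardinal.mk_congr (MulAut.congr multEquiv).toEquiv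

end CardAutAux


/-- `G = ⊕_p ℤ[1/p]` is a countable group with `|Aut G| = 2 ^ ℵ₀` and
`|Aut (Aut G)| = 2 ^ (2 ^ ℵ₀)`. -/
theorem card_aut_aut_directSum_padicRationals :
    Countable (⨁ (q : Nat.Primes), padicRationals q.1 q.2) ∧
    Cardinal.mk (AddAut (⨁ (q : Nat.Primes), padicRationals q.1 q.2)) =
      2 ^ Cardinal.aleph0 ∧
    Cardinal.mk (MulAut (Multiplicative (AddAut (⨁ (q : Nat.Primes), padicRationals q.1 q.2)))) =
      (2 : Cardinal) ^ ((2 : Cardinal) ^ Cardinal.aleph0) := by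
  exact ⟨inferInstance, CardAutAux.mk_addAut, CardAutAux.mk_mulAut'⟩
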